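/- The Cygan gauge on the Heisenberg group, defined by ||(ξ,v)||_c = | ‖ξ‖² − iv |^{1/2}, satisfies the triangle-type inequality ||p·q||_c ≤ ||p||_c + ||q||_c for all p, q ∈ H_n, where · denotes the Heisenberg product. -/

import Mathlib

noncomputable def Hmul {m : ℕ} (p q : EuclideanSpace ℂ (Fin m) × ℝ) :
    EuclideanSpace ℂ (Fin m) × ℝ :=
  (p.1 + q.1, p.2 + q.2 + 2 * (inner ℂ q.1 p.1 : ℂ).im)

/-- The Cygan gauge `||(ξ,v)||_c = | ‖ξ‖² − iv |^{1/2}` on the Heisenberg group. -/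
noncomputable def cygan {m : ℕ} (p : EuclideanSpace ℂ (Fin m) × ℝ) : ℝ :=
  Real.sqrt (‖((‖p.1‖ ^ 2 : ℝ) : ℂ) - p.2 * Complex.I‖)

/-- the Cygan gauge satisfies the triangle-type inequality
`||p·q||_c ≤ ||p||_c + ||q||_c` for the Heisenberg product. -/
theorem cygan_gauge_triangle (n : ℕ) (hn : 2 ≤ n)
    (p q : EuclideanSpace ℂ (Fin (n-1)) × ℝ) :
    cygan (Hmul p q) ≤ cygan p + cygan q := by
  set A : ℂ := ((‖p.1‖ ^ 2 : ℝ) : ℂ) - p.2 * Complex.I with hA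
  set B : ℂ := ((‖q.1‖ ^ 2 : ℝ) : ℂ) - q.2 * Complex.I with hB
  set w : ℂ := (inner ℂ p.1 q.1 : ℂ) with hw
  have hC : ((‖(Hmul p q).1‖ ^ 2 : ℝ) : ℂ) - (Hmul p q).2 * Complex.I
      = A + B + 2 * w := by
    have hnorm : ‖p.1 + q.1‖ ^ 2
        = ‖p.1‖ ^ 2 + 2 * (inner ℂ p.1 q.1 : ℂ).re + ‖q.1‖ ^ 2 := by
      simpa using @norm_add_sq ℂ _ _ _ _ p.1 q.1
    have him : (inner ℂ q.1 p.1 : ℂ).im = -(inner ℂ p.1 q.1 : ℂ).im := by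
      rw [← inner_conj_symm q.1 p.1]; exact Complex.conj_im _
    simp only [Hmul]
    apply Complex.ext <;>
      simp only [hnorm, him, hA, hB, ← hw, Complex.add_re, Complex.add_im,
        Complex.sub_re, Complex.sub_im, Complex.mul_re, Complex.mul_im,
        Complex.ofReal_re, Complex.ofReal_im, Complex.ofReal_add, Complex.ofReal_mul,
        Complex.I_re, Complex.I_im, Complex.re_ofNat, Complex.im_ofNat] <;> ring
  have hreA : ‖p.1‖ ^ 2 ≤ ‖A‖ := by
    have h := Complex.abs_re_le_norm A
    have : A.re = ‖p.1‖ ^ 2 := by simp [hA, -Complex.ofReal_pow]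
    rw [this] at h
    exact le_trans (le_abs_self _) h
  have hreB : ‖q.1‖ ^ 2 ≤ ‖B‖ := by
    have h := Complex.abs_re_le_norm B
    have : B.re = ‖q.1‖ ^ 2 := by simp [hB, -Complex.ofReal_pow]
    rw [this] at h
    exact le_trans (le_abs_self _) h
  have hnp : ‖p.1‖ ≤ Real.sqrt (‖A‖) := by
    have := Real.sqrt_le_sqrt hreA
    rwa [Real.sqrt_sq (norm_nonneg _)] at this
  have hnq : ‖q.1‖ ≤ Real.sqrt (‖B‖) := by
    have := Real.sqrt_le_sqrt hreB
    rwa [Real.sqrt_sq (norm_nonneg _)] at this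
  have hwle : ‖w‖ ≤ Real.sqrt (‖A‖) * Real.sqrt (‖B‖) := by
    have h1 : ‖w‖ ≤ ‖p.1‖ * ‖q.1‖ := norm_inner_le_norm p.1 q.1
    calc ‖w‖ = ‖w‖ := rfl
      _ ≤ ‖p.1‖ * ‖q.1‖ := h1
      _ ≤ Real.sqrt (‖A‖) * Real.sqrt (‖B‖) :=
        mul_le_mul hnp hnq (norm_nonneg _) (Real.sqrt_nonneg _)
  have key : ‖A + B + 2 * w‖
      ≤ (Real.sqrt (‖A‖) + Real.sqrt (‖B‖)) ^ 2 := by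
    have h1 : ‖A + B + 2 * w‖
        ≤ ‖A‖ + ‖B‖ + 2 * ‖w‖ := by
      calc ‖A + B + 2 * w‖
          ≤ ‖A + B‖ + ‖2 * w‖ := norm_add_le _ _
        _ ≤ ‖A‖ + ‖B‖ + ‖2 * w‖ := by
            have := norm_add_le A B; linarith
        _ = ‖A‖ + ‖B‖ + 2 * ‖w‖ := by
            simp [norm_mul]
    have h2 : ‖A‖ = Real.sqrt (‖A‖) ^ 2 :=
      (Real.sq_sqrt (norm_nonneg A)).symm
    have h3 : ‖B‖ = Real.sqrt (‖B‖) ^ 2 :=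
      (Real.sq_sqrt (norm_nonneg B)).symm
    nlinarith [hwle]
  unfold cygan
  rw [hC]
  calc Real.sqrt (‖A + B + 2 * w‖)
      ≤ Real.sqrt ((Real.sqrt (‖A‖) + Real.sqrt (‖B‖)) ^ 2) :=
        Real.sqrt_le_sqrt key
    _ = Real.sqrt (‖A‖) + Real.sqrt (‖B‖) :=
        Real.sqrt_sq (by positivity)
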